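/- Let G₁ and G₂ be strongly connected digraphs each with n ≥ 4 vertices and m arcs, and let α ∈ [1/√2, 1). If Δ⁺(G₁) ≥ 2α(1−α)(m−n+1) + 2α and Δ⁺(G₁) > Δ⁺(G₂), then λ_α(G₁) > λ_α(G₂). -/

import Mathlib

open Matrix Finset ENNReal

/-- The outdegree of a vertex in a digraph given by its arc relation. -/
def outDeg {V : Type*} [Fintype V] (E : V → V → Prop) [DecidableRel E] (u : V) : ℕ :=
  (Finset.univ.filter (fun v => E u v)).card

/-- The maximum outdegree. -/
def maxOutDeg {V : Type*} [Fintype V] (E : V → V → Prop) [DecidableRel E] : ℕ :=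
  Finset.univ.sup (outDeg E)

/-- A simple digraph has no loops. -/
def IsSimpleDigraph {V : Type*} (E : V → V → Prop) : Prop := ∀ v, ¬ E v v

/-- Strong connectivity: every vertex reaches every other by a directed walk. -/
def StronglyConnected {V : Type*} (E : V → V → Prop) : Prop :=
  ∀ u v, Relation.ReflTransGen E u v

/-- The A_α matrix  α D + (1-α) A  of a digraph, over ℂ. -/
noncomputable def Aalpha {V : Type*} [Fintype V] [DecidableEq V] (α : ℝ)
    (E : V → V → Prop) [DecidableRel E] : Matrix V V ℂ :=
  (α : ℂ) • Matrix.diagonal (fun u => (outDeg E u : ℂ)) +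
    ((1 - α : ℝ) : ℂ) • Matrix.of (fun u v => if E u v then (1 : ℂ) else 0)

/-- The A_α spectral radius of a digraph. -/
noncomputable def lambdaAlpha {V : Type*} [Fintype V] [DecidableEq V] (α : ℝ)
    (E : V → V → Prop) [DecidableRel E] : ℝ≥0∞ :=
  spectralRadius ℂ (Aalpha α E)

/-- The signless Laplacian matrix D + A of a digraph, over ℂ. -/
noncomputable def signlessLaplacian {V : Type*} [Fintype V] [DecidableEq V]
    (E : V → V → Prop) [DecidableRel E] : Matrix V V ℂ :=
  Matrix.diagonal (fun u => (outDeg E u : ℂ)) +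
    Matrix.of (fun u v => if E u v then (1 : ℂ) else 0)

/-- The signless Laplacian spectral radius of a digraph. -/
noncomputable def qSpec {V : Type*} [Fintype V] [DecidableEq V]
    (E : V → V → Prop) [DecidableRel E] : ℝ≥0∞ :=
  spectralRadius ℂ (signlessLaplacian E)


section Helpers

variable {V : Type*} [Fintype V] [DecidableEq V]

attribute [local instance] Matrix.linftyOpNormedRing Matrix.linftyOpNormedAlgebra

set_option linter.unusedSectionVars false

private lemma outDeg_pos (E : V → V → Prop) [DecidableRel E]
    (hc : StronglyConnected E) (h2 : 2 ≤ Fintype.card V) (v : V) :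
    1 ≤ outDeg E v := by
  obtain ⟨w, hw⟩ := Fintype.exists_ne_of_one_lt_card (by omega) v
  rcases (hc v w).cases_head with h' | ⟨z, hz, -⟩
  · exact absurd h'.symm hw
  · have hz' : z ∈ univ.filter (fun t => E v t) := by simp [hz]
    have := Finset.card_pos.mpr ⟨z, hz'⟩
    simpa [outDeg] using this


private lemma exists_eigenvector [Nonempty V] (M : Matrix V V ℂ) {μ : ℂ}
    (h : μ ∈ spectrum ℂ M) : ∃ x : V → ℂ, x ≠ 0 ∧ M.mulVec x = μ • x := by
  have h' := spectrum.mem_iff.mp h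
  set B := algebraMap ℂ (Matrix V V ℂ) μ - M with hB
  have hdet : B.det = 0 := by
    by_contra hd
    exact h' ((Matrix.isUnit_iff_isUnit_det B).mpr (isUnit_iff_ne_zero.mpr hd))
  obtain ⟨x, hx0, hx⟩ := (Matrix.exists_mulVec_eq_zero_iff).mpr hdet
  refine ⟨x, hx0, ?_⟩
  have h1 : B.mulVec x = 0 := hx
  rw [hB, Matrix.sub_mulVec, Algebra.algebraMap_eq_smul_one, Matrix.smul_mulVec,
    Matrix.one_mulVec, sub_eq_zero] at h1
  exact h1.symm


private lemma aalpha_mulVec (α : ℝ) (E : V → V → Prop) [DecidableRel E] (x : V → ℂ) (v : V) :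
    (Aalpha α E).mulVec x v
      = (α : ℂ) * (outDeg E v : ℂ) * x v
        + ((1 - α : ℝ) : ℂ) * ∑ w ∈ univ.filter (fun w => E v w), x w := by
  classical
  simp only [Aalpha, Matrix.mulVec, dotProduct, Matrix.add_apply, Matrix.smul_apply,
    Matrix.diagonal_apply, Matrix.of_apply, smul_eq_mul, add_mul, ite_mul, zero_mul,
    mul_ite, mul_zero, mul_one]
  rw [Finset.sum_add_distrib]
  congr 1
  · rw [Finset.sum_ite_eq univ v (fun w => (α : ℂ) * (outDeg E v : ℂ) * x w)]
    simp [mul_assoc]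
  · rw [Finset.mul_sum, Finset.sum_filter]


private lemma entry_nnnorm_le (M : Matrix V V ℂ) (i j : V) : ‖M i j‖₊ ≤ ‖M‖₊ := by
  rw [Matrix.linfty_opNNNorm_def]
  exact le_trans
    (Finset.single_le_sum (f := fun k => ‖M i k‖₊) (fun k _ => zero_le) (Finset.mem_univ j))
    (Finset.le_sup (f := fun r => ∑ k, ‖M r k‖₊) (Finset.mem_univ i))


private lemma partA [Nonempty V] (E : V → V → Prop) [DecidableRel E]
    (hs : IsSimpleDigraph E) (α : ℝ) (hα0 : 0 ≤ α) (hα1 : α ≤ 1) :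
    ENNReal.ofReal (α * maxOutDeg E) ≤ spectralRadius ℂ (Aalpha α E) := by
  classical
  haveI : CompleteSpace (Matrix V V ℂ) := FiniteDimensional.complete ℂ _
  obtain ⟨u, -, hu⟩ := Finset.exists_mem_eq_sup univ univ_nonempty (outDeg E)
  -- real matrix
  set R : Matrix V V ℝ := α • Matrix.diagonal (fun v => (outDeg E v : ℝ)) +
      (1 - α) • Matrix.of (fun v w => if E v w then (1:ℝ) else 0) with hR
  have hmap : Aalpha α E = (Complex.ofRealHom.mapMatrix : Matrix V V ℝ →+* Matrix V V ℂ) R := by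
    ext i j
    simp only [Aalpha, hR, Matrix.add_apply, Matrix.smul_apply, Matrix.diagonal_apply,
      Matrix.of_apply, smul_eq_mul, RingHom.mapMatrix_apply, Matrix.map_apply,
      Complex.ofRealHom_eq_coe]
    push_cast
    split_ifs <;> simp
  have hRent : ∀ i j, 0 ≤ R i j := by
    intro i j
    have hd : (0:ℝ) ≤ (outDeg E j : ℝ) := Nat.cast_nonneg _
    simp only [hR, Matrix.add_apply, Matrix.smul_apply, Matrix.diagonal_apply,
      Matrix.of_apply, smul_eq_mul, mul_ite, mul_one, mul_zero]
    split_ifs <;> nlinarith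
  have hRnn : ∀ k : ℕ, ∀ i j, 0 ≤ (R ^ k) i j := by
    intro k
    induction k with
    | zero => intro i j; by_cases h : i = j <;> simp [Matrix.one_apply, h]
    | succ k ih =>
      intro i j
      rw [pow_succ, Matrix.mul_apply]
      exact Finset.sum_nonneg fun w _ => mul_nonneg (ih i w) (hRent w j)
  have hM0 : (0:ℝ) ≤ α * maxOutDeg E := mul_nonneg hα0 (Nat.cast_nonneg _)
  have hRuu : R u u = α * (maxOutDeg E : ℝ) := by
    simp only [hR, Matrix.add_apply, Matrix.smul_apply, Matrix.diagonal_apply, Matrix.of_apply,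
      smul_eq_mul, if_pos rfl, if_neg (hs u), mul_zero, add_zero, maxOutDeg, hu]
    simp
  have hdiag : ∀ k : ℕ, (α * (maxOutDeg E : ℝ)) ^ k ≤ (R ^ k) u u := by
    intro k
    induction k with
    | zero => simp
    | succ k ih =>
      rw [pow_succ, pow_succ, Matrix.mul_apply]
      calc (α * (maxOutDeg E : ℝ)) ^ k * (α * (maxOutDeg E : ℝ))
          ≤ (R ^ k) u u * R u u :=
            mul_le_mul ih (le_of_eq hRuu.symm) hM0 (hRnn k u u)
        _ ≤ ∑ w, (R ^ k) u w * R w u :=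
            Finset.single_le_sum (f := fun w => (R ^ k) u w * R w u)
              (fun w _ => mul_nonneg (hRnn k u w) (hRent w u)) (Finset.mem_univ u)
  have gel := spectrum.pow_nnnorm_pow_one_div_tendsto_nhds_spectralRadius (Aalpha α E)
  refine ge_of_tendsto gel ?_
  rw [Filter.eventually_atTop]
  refine ⟨1, fun k hk => ?_⟩
  have hk0 : (k:ℝ) ≠ 0 := by positivity
  have hent : (α * (maxOutDeg E : ℝ)) ^ k ≤ ‖(Aalpha α E ^ k) u u‖ := by
    have h2 : (Aalpha α E) ^ k = (Complex.ofRealHom.mapMatrix : Matrix V V ℝ →+* Matrix V V ℂ) (R ^ k) := by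
      rw [hmap, map_pow]
    rw [h2, RingHom.mapMatrix_apply]
    have h3 : ((R ^ k).map Complex.ofRealHom) u u = (((R ^ k) u u : ℝ) : ℂ) := rfl
    rw [h3, Complex.norm_real, Real.norm_eq_abs]
    exact le_trans (hdiag k) (le_abs_self _)
  have h1 : (ENNReal.ofReal (α * (maxOutDeg E : ℝ))) ^ k ≤ (‖Aalpha α E ^ k‖₊ : ℝ≥0∞) := by
    calc (ENNReal.ofReal (α * (maxOutDeg E : ℝ))) ^ k
        = ENNReal.ofReal ((α * (maxOutDeg E : ℝ)) ^ k) := (ENNReal.ofReal_pow hM0 k).symm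
      _ ≤ ENNReal.ofReal ‖(Aalpha α E ^ k) u u‖ := ENNReal.ofReal_le_ofReal hent
      _ = (‖(Aalpha α E ^ k) u u‖₊ : ℝ≥0∞) := (ofReal_norm _).trans (enorm_eq_nnnorm _)
      _ ≤ _ := ENNReal.coe_le_coe.mpr (entry_nnnorm_le _ u u)
  calc ENNReal.ofReal (α * (maxOutDeg E : ℝ))
      = ((ENNReal.ofReal (α * (maxOutDeg E : ℝ))) ^ k) ^ (1 / (k:ℝ) : ℝ) := by
        rw [← ENNReal.rpow_natCast _ k, ← ENNReal.rpow_mul, mul_one_div, div_self hk0,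
          ENNReal.rpow_one]
    _ ≤ _ := ENNReal.rpow_le_rpow h1 (by positivity)

set_option maxHeartbeats 1000000 in
private lemma keyB [Nonempty V] (E : V → V → Prop) [DecidableRel E]
    (hs : IsSimpleDigraph E)
    (hd1 : ∀ v, 1 ≤ outDeg E v)
    (α T : ℝ) (hα : 1 / Real.sqrt 2 ≤ α) (hα1 : α < 1)
    (Δ : ℕ)
    (hdle : ∀ v, outDeg E v + 1 ≤ Δ)
    (hsum : (∑ v, (outDeg E v : ℝ)) = (Fintype.card V : ℝ) + T - 1)
    (hΔT : 2 * α * (1 - α) * T + 2 * α ≤ (Δ : ℝ))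
    {μ : ℂ} (hμ : μ ∈ spectrum ℂ (Aalpha α E)) :
    ‖μ‖ < α * Δ := by
  by_contra hcon
  push_neg at hcon
  -- basic alpha facts
  have hs2 : (0:ℝ) < Real.sqrt 2 := by positivity
  have hs2' : Real.sqrt 2 * Real.sqrt 2 = 2 := Real.mul_self_sqrt (by norm_num)
  have hs2'' : Real.sqrt 2 < 2 := by nlinarith
  have hαhalf : (1:ℝ)/2 < α := by
    have : (1:ℝ)/2 < 1 / Real.sqrt 2 := by
      apply one_div_lt_one_div_of_lt hs2 hs2''
    linarith
  have hαpos : (0:ℝ) < α := by linarith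
  have hα2 : (1:ℝ)/2 ≤ α * α := by
    have h1 : 1 / Real.sqrt 2 * (1 / Real.sqrt 2) ≤ α * α :=
      mul_le_mul hα hα (by positivity) hαpos.le
    have h2 : 1 / Real.sqrt 2 * (1 / Real.sqrt 2) = 1/2 := by
      field_simp
      rw [Real.sq_sqrt (by norm_num : (0:ℝ) ≤ 2)]
    linarith
  have hβpos : (0:ℝ) < 1 - α := by linarith
  set β : ℝ := 1 - α with hβdef
  -- T ≥ 1
  have hT1 : (1:ℝ) ≤ T := by
    have h1 : (Fintype.card V : ℝ) ≤ ∑ v, (outDeg E v : ℝ) := by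
      rw [← Finset.card_univ]
      calc ((#univ : ℕ) : ℝ) = ∑ _v : V, (1:ℝ) := by simp
        _ ≤ ∑ v, (outDeg E v : ℝ) :=
          Finset.sum_le_sum fun v _ => by exact_mod_cast hd1 v
    linarith [hsum]
  -- eigenvector
  obtain ⟨x, hx0, hx⟩ := exists_eigenvector _ hμ
  set y : V → ℝ := fun v => ‖x v‖ with hydef
  obtain ⟨u, -, hu⟩ := Finset.exists_max_image univ y univ_nonempty
  have hy0 : ∀ v, 0 ≤ y v := fun v => norm_nonneg _
  have hyu : ∀ v, y v ≤ y u := fun v => hu v (mem_univ v)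
  have hyupos : 0 < y u := by
    rcases Function.ne_iff.mp hx0 with ⟨v, hv⟩
    exact lt_of_lt_of_le (norm_pos_iff.mpr hv) (hyu v)
  set r : ℝ := ‖μ‖ with hrdef
  have hr0 : 0 ≤ r := norm_nonneg _
  set d : V → ℝ := fun v => (outDeg E v : ℝ) with hddef
  have hd1' : ∀ v, (1:ℝ) ≤ d v := fun v => by
    have := hd1 v; simp only [hddef]; exact_mod_cast this
  have hdle' : ∀ v, d v ≤ (Δ:ℝ) - 1 := fun v => by
    have h := hdle v
    have h' : (outDeg E v : ℝ) + 1 ≤ (Δ:ℝ) := by exact_mod_cast h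
    simp only [hddef]; linarith
  have hΔ2 : (2:ℝ) ≤ (Δ:ℝ) := by have := hd1' u; have := hdle' u; linarith
  -- eigen equation
  have heq : ∀ v, μ * x v = (α:ℂ) * (outDeg E v : ℂ) * x v
      + ((β:ℝ):ℂ) * ∑ w ∈ univ.filter (fun w => E v w), x w := by
    intro v
    have h := congrFun hx v
    rw [aalpha_mulVec] at h
    rw [← hβdef] at h
    simpa using h.symm
  -- F1
  have hF1 : ∀ v, (r - α * d v) * y v ≤ β * ∑ w ∈ univ.filter (fun w => E v w), y w := by
    intro v
    have h1 : (μ - (α:ℂ) * (outDeg E v : ℂ)) * x v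
        = ((β:ℝ):ℂ) * ∑ w ∈ univ.filter (fun w => E v w), x w := by
      rw [sub_mul]; linear_combination (heq v)
    have h2 := congrArg norm h1
    rw [norm_mul, norm_mul] at h2
    have h3 : ‖((β:ℝ):ℂ)‖ = β := by
      rw [Complex.norm_real, Real.norm_eq_abs, abs_of_pos hβpos]
    have h4 : r - α * d v ≤ ‖μ - (α:ℂ) * (outDeg E v : ℂ)‖ := by
      have h5 := norm_sub_norm_le μ ((α:ℂ) * (outDeg E v : ℂ))
      rw [norm_mul, Complex.norm_real, Complex.norm_natCast, Real.norm_eq_abs,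
        abs_of_pos hαpos] at h5
      exact h5
    calc (r - α * d v) * y v
        ≤ ‖μ - (α:ℂ) * (outDeg E v : ℂ)‖ * y v := mul_le_mul_of_nonneg_right h4 (hy0 v)
      _ = β * ‖∑ w ∈ univ.filter (fun w => E v w), x w‖ := by rw [← h3]; exact h2
      _ ≤ β * ∑ w ∈ univ.filter (fun w => E v w), y w :=
          mul_le_mul_of_nonneg_left (norm_sum_le _ _) hβpos.le
  -- F2
  have hF2 : ∀ v, (∑ w ∈ univ.filter (fun w => E v w), y w) ≤ d v * y u := by
    intro v
    calc (∑ w ∈ univ.filter (fun w => E v w), y w)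
        ≤ ∑ _w ∈ univ.filter (fun w => E v w), y u :=
          Finset.sum_le_sum fun w _ => hyu w
      _ = d v * y u := by
          rw [Finset.sum_const, nsmul_eq_mul]; rfl
  -- F2nn
  have hF2nn : ∀ v, 0 ≤ ∑ w ∈ univ.filter (fun w => E v w), y w :=
    fun v => Finset.sum_nonneg fun w _ => hy0 w
  -- F3
  have hF3 : ∀ v, r * y v ≤ d v * y u := by
    intro v
    have h1 := hF1 v
    have h2 := hF2 v
    have h3 : α * d v * y v ≤ α * d v * y u :=
      mul_le_mul_of_nonneg_left (hyu v) (by positivity)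
    have hβd : β * (∑ w ∈ univ.filter (fun w => E v w), y w) ≤ β * (d v * y u) :=
      mul_le_mul_of_nonneg_left h2 hβpos.le
    have hexp : r * y v = (r - α * d v) * y v + α * d v * y v := by ring
    have hsum2 : β * (d v * y u) + α * d v * y u = d v * y u := by
      rw [hβdef]; ring
    linarith
  -- budget
  have hbudget : ∀ p : V, (∑ v ∈ univ.filter (fun w => E p w), (d v - 1))
      ≤ (T - 1) - (d p - 1) := by
    intro p
    have hnotmem : p ∉ univ.filter (fun w => E p w) := by simp [hs p]
    have h1 : (d p - 1) + ∑ v ∈ univ.filter (fun w => E p w), (d v - 1)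
        = ∑ v ∈ insert p (univ.filter (fun w => E p w)), (d v - 1) :=
      (Finset.sum_insert (f := fun v => d v - 1) hnotmem).symm
    have h2 : (∑ v ∈ insert p (univ.filter (fun w => E p w)), (d v - 1))
        ≤ ∑ v, (d v - 1) := by
      apply Finset.sum_le_sum_of_subset_of_nonneg (Finset.subset_univ _)
      intro v _ _
      linarith [hd1' v]
    have h3 : (∑ v, (d v - 1)) = T - 1 := by
      rw [Finset.sum_sub_distrib, Finset.sum_const, Finset.card_univ, nsmul_eq_mul, mul_one]
      simp only [hddef]
      rw [hsum]; ring
    linarith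
  -- neighborhood degree sum
  have hNsum : (∑ v ∈ univ.filter (fun w => E u w), d v) ≤ T := by
    have h1 := hbudget u
    have h2 : (∑ v ∈ univ.filter (fun w => E u w), d v)
        = (∑ v ∈ univ.filter (fun w => E u w), (d v - 1)) + d u := by
      have hcard : ((univ.filter (fun w => E u w)).card : ℝ) = d u := by
        simp only [hddef]; norm_cast
      rw [Finset.sum_sub_distrib, Finset.sum_const, nsmul_eq_mul, mul_one, hcard]
      ring
    linarith
  set S := ∑ w ∈ univ.filter (fun w => E u w), y w with hSdef
  have hF6 : r * (r - α * d u) ≤ β * T := by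
    have h2 : (r * (r - α * d u)) * y u ≤ r * (β * S) := by
      have h := mul_le_mul_of_nonneg_left (hF1 u) hr0
      calc (r * (r - α * d u)) * y u = r * ((r - α * d u) * y u) := by ring
        _ ≤ r * (β * S) := h
    have h3 : r * (β * S) = β * ∑ w ∈ univ.filter (fun w => E u w), (r * y w) := by
      rw [← Finset.mul_sum, hSdef]; ring
    have h4 : (∑ w ∈ univ.filter (fun w => E u w), (r * y w))
        ≤ ∑ w ∈ univ.filter (fun w => E u w), d w * y u :=
      Finset.sum_le_sum fun w _ => hF3 w
    have h5 : (∑ w ∈ univ.filter (fun w => E u w), d w * y u) ≤ T * y u := by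
      rw [← Finset.sum_mul]
      exact mul_le_mul_of_nonneg_right hNsum (le_of_lt hyupos)
    have h7 : (r * (r - α * d u)) * y u ≤ (β * T) * y u := by
      calc (r * (r - α * d u)) * y u ≤ r * (β * S) := h2
        _ = β * ∑ w ∈ univ.filter (fun w => E u w), (r * y w) := h3
        _ ≤ β * (T * y u) := by
            apply mul_le_mul_of_nonneg_left _ hβpos.le
            exact le_trans h4 h5
        _ = (β * T) * y u := by ring
    exact le_of_mul_le_mul_right h7 hyupos
  have hduΔ : d u = (Δ:ℝ) - 1 := by
    by_contra hne
    have hlt : d u ≤ (Δ:ℝ) - 2 := by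
      have h1 : outDeg E u + 1 ≠ Δ := by
        intro hEq
        apply hne
        simp only [hddef]
        have h1' : ((outDeg E u : ℕ):ℝ) + 1 = (Δ:ℝ) := by exact_mod_cast congrArg Nat.cast hEq
        linarith
      have h2 : outDeg E u + 2 ≤ Δ := by have := hdle u; omega
      have h3 : (outDeg E u : ℝ) + 2 ≤ (Δ:ℝ) := by exact_mod_cast h2
      simp only [hddef]; linarith
    have hA : (α * (Δ:ℝ)) * (2 * α) ≤ r * (r - α * d u) := by
      apply mul_le_mul hcon _ (by positivity) hr0
      have h1 : α * d u ≤ α * ((Δ:ℝ) - 2) := mul_le_mul_of_nonneg_left hlt hαpos.le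
      have hexp : α*((Δ:ℝ)-2) = α*(Δ:ℝ) - 2*α := by ring
      linarith
    have h8 : 2*α*α*(Δ:ℝ) ≤ β*T := by
      have hexp2 : (α*(Δ:ℝ))*(2*α) = 2*α*α*(Δ:ℝ) := by ring
      linarith [hA, hF6]
    have h9 : 2*α*α*(2*α*β*T + 2*α) ≤ 2*α*α*(Δ:ℝ) :=
      mul_le_mul_of_nonneg_left hΔT (by positivity)
    have hP : (0:ℝ) < β*T := mul_pos hβpos (by linarith)
    have h10 : 4*(α*α*α)*(β*T) + 4*(α*α*α) ≤ β*T := by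
      have hid2 : 2*α*α*(2*α*β*T+2*α) = 4*(α*α*α)*(β*T) + 4*(α*α*α) := by ring
      linarith
    have h11 : (1:ℝ) < 4*(α*α*α) := by
      have h11a : α*(1/2) ≤ α*(α*α) := mul_le_mul_of_nonneg_left hα2 (le_of_lt hαpos)
      linarith
    have h12 : (1:ℝ)*(β*T) < (4*(α*α*α))*(β*T) := mul_lt_mul_of_pos_right h11 hP
    linarith
  have hF8 : ∀ v, α * ((Δ:ℝ) - 1) * y v ≤ (β + d v - 1) * y u := by
    intro v
    rcases le_or_gt (α * (Δ:ℝ)) (d v) with hA | hB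
    · have h1 : α * ((Δ:ℝ) - 1) ≤ β + d v - 1 := by
        rw [hβdef]; linarith
      have h2 : 0 ≤ α * ((Δ:ℝ)-1) := by nlinarith [hΔ2]
      exact mul_le_mul h1 (hyu v) (hy0 v) (by linarith [hd1' v, hβpos])
    · have hpos : (0:ℝ) < (Δ:ℝ) - d v := by linarith [hdle' v]
      have hB1 : α * ((Δ:ℝ) - d v) * y v ≤ β * (d v * y u) := by
        have h1 : α * ((Δ:ℝ) - d v) ≤ r - α * d v := by nlinarith [hcon]
        calc α * ((Δ:ℝ) - d v) * y v ≤ (r - α * d v) * y v :=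
              mul_le_mul_of_nonneg_right h1 (hy0 v)
          _ ≤ β * ∑ w ∈ univ.filter (fun w => E v w), y w := hF1 v
          _ ≤ β * (d v * y u) := mul_le_mul_of_nonneg_left (hF2 v) hβpos.le
      have hkey : ((Δ:ℝ)-1) * (β * d v) ≤ (β + d v - 1) * ((Δ:ℝ) - d v) := by
        have hprod : 0 ≤ (d v - 1) * (α * (Δ:ℝ) - d v) :=
          mul_nonneg (by linarith [hd1' v]) (by linarith)
        have hid3 : (β + d v - 1) * ((Δ:ℝ) - d v) - ((Δ:ℝ)-1)*(β*d v)
            = (d v - 1)*(α*(Δ:ℝ) - d v) := by rw [hβdef]; ring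
        linarith
      have hmain : (α * ((Δ:ℝ)-1) * y v) * ((Δ:ℝ) - d v)
          ≤ ((β + d v - 1) * y u) * ((Δ:ℝ) - d v) := by
        calc (α * ((Δ:ℝ)-1) * y v) * ((Δ:ℝ) - d v)
            = ((Δ:ℝ)-1) * (α * ((Δ:ℝ) - d v) * y v) := by ring
          _ ≤ ((Δ:ℝ)-1) * (β * (d v * y u)) :=
              mul_le_mul_of_nonneg_left hB1 (by linarith [hΔ2])
          _ = (((Δ:ℝ)-1) * (β * d v)) * y u := by ring
          _ ≤ ((β + d v - 1) * ((Δ:ℝ) - d v)) * y u :=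
              mul_le_mul_of_nonneg_right hkey (le_of_lt hyupos)
          _ = ((β + d v - 1) * y u) * ((Δ:ℝ) - d v) := by ring
      exact le_of_mul_le_mul_right hmain hpos
  have hcardu : ((univ.filter (fun w => E u w)).card : ℝ) = (Δ:ℝ) - 1 := by
    have h1 : ((univ.filter (fun w => E u w)).card : ℝ) = d u := by
      simp only [hddef]; norm_cast
    rw [h1, hduΔ]
  have hF9 : α * ((Δ:ℝ)-1) * S ≤ (β * ((Δ:ℝ)-1) + (T - (Δ:ℝ) + 1)) * y u := by
    have h1 : α * ((Δ:ℝ)-1) * S = ∑ v ∈ univ.filter (fun w => E u w), α * ((Δ:ℝ)-1) * y v := by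
      rw [hSdef, Finset.mul_sum]
    have h2 : (∑ v ∈ univ.filter (fun w => E u w), α*((Δ:ℝ)-1)*y v)
        ≤ ∑ v ∈ univ.filter (fun w => E u w), (β + d v - 1) * y u :=
      Finset.sum_le_sum fun v _ => hF8 v
    have h3 : (∑ v ∈ univ.filter (fun w => E u w), (β + d v - 1))
        = β * ((Δ:ℝ)-1) + ∑ v ∈ univ.filter (fun w => E u w), (d v - 1) := by
      have h3a : (∑ v ∈ univ.filter (fun w => E u w), (β + d v - 1))
          = ∑ v ∈ univ.filter (fun w => E u w), (β + (d v - 1)) := by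
        apply Finset.sum_congr rfl; intros; ring
      rw [h3a, Finset.sum_add_distrib, Finset.sum_const, nsmul_eq_mul, hcardu]
      ring
    have h4 : (∑ v ∈ univ.filter (fun w => E u w), (d v - 1)) ≤ T - (Δ:ℝ) + 1 := by
      have h5 := hbudget u; rw [hduΔ] at h5; linarith
    have h6 : (∑ v ∈ univ.filter (fun w => E u w), (β + d v - 1) * y u)
        = (β * ((Δ:ℝ)-1) + ∑ v ∈ univ.filter (fun w => E u w), (d v - 1)) * y u := by
      rw [← Finset.sum_mul, h3]
    have h7 : (β * ((Δ:ℝ)-1) + ∑ v ∈ univ.filter (fun w => E u w), (d v - 1)) * y u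
        ≤ (β * ((Δ:ℝ)-1) + (T - (Δ:ℝ) + 1)) * y u := by
      apply mul_le_mul_of_nonneg_right _ (hy0 u)
      linarith
    rw [h1]
    exact le_trans h2 (le_trans (le_of_eq h6) h7)
  have hF10 : α * y u ≤ β * S := by
    have h1 : α * y u ≤ (r - α * d u) * y u := by
      apply mul_le_mul_of_nonneg_right _ (hy0 u)
      rw [hduΔ]; nlinarith [hcon]
    exact le_trans h1 (hF1 u)
  have hfin : α * α * ((Δ:ℝ)-1) ≤ β * (β*((Δ:ℝ)-1) + (T - (Δ:ℝ) + 1)) := by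
    have h1 : (α * α * ((Δ:ℝ)-1)) * y u
        ≤ (β * (β*((Δ:ℝ)-1) + (T - (Δ:ℝ)+1))) * y u := by
      calc (α * α * ((Δ:ℝ)-1)) * y u = (α*((Δ:ℝ)-1)) * (α * y u) := by ring
        _ ≤ (α*((Δ:ℝ)-1)) * (β * S) :=
            mul_le_mul_of_nonneg_left hF10 (by nlinarith [hΔ2])
        _ = β * (α * ((Δ:ℝ)-1) * S) := by ring
        _ ≤ β * ((β*((Δ:ℝ)-1) + (T - (Δ:ℝ)+1)) * y u) :=
            mul_le_mul_of_nonneg_left hF9 hβpos.le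
        _ = (β * (β*((Δ:ℝ)-1) + (T - (Δ:ℝ)+1))) * y u := by ring
    exact le_of_mul_le_mul_right h1 hyupos
  have hmain : α * ((Δ:ℝ)-1) ≤ β * T := by
    rw [hβdef] at hfin ⊢
    nlinarith [hfin]
  have hP : (0:ℝ) < β * T := mul_pos hβpos (by linarith)
  have h1 : α * (2*α*β*T + 2*α - 1) ≤ α*((Δ:ℝ)-1) := by
    apply mul_le_mul_of_nonneg_left _ hαpos.le
    linarith [hΔT]
  have h2 : α * (2*α*β*T + 2*α - 1) ≤ β * T := le_trans h1 hmain
  have hid : α * (2*α*β*T + 2*α - 1) - β*T = (2*(α*α) - 1)*(β*T) + α*(2*α - 1) := by ring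
  have h3 : (0:ℝ) ≤ (2*(α*α) - 1)*(β*T) := mul_nonneg (by linarith [hα2]) hP.le
  have h4 : (0:ℝ) < α*(2*α-1) := mul_pos hαpos (by linarith [hαhalf])
  linarith


private lemma spec_attains [Nonempty V] (M : Matrix V V ℂ) :
    ∃ μ ∈ spectrum ℂ M, spectralRadius ℂ M ≤ (‖μ‖₊ : ℝ≥0∞) := by
  haveI : CompleteSpace (Matrix V V ℂ) := FiniteDimensional.complete ℂ _
  haveI : Nontrivial (Matrix V V ℂ) := by
    obtain ⟨v⟩ := ‹Nonempty V›
    exact ⟨0, 1, fun h => by simpa using congrFun (congrFun h v) v⟩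
  have hne := spectrum.nonempty M
  have hcpt : IsCompact (spectrum ℂ M) := spectrum.isCompact M
  obtain ⟨μs, hμs, hmaxOn⟩ := hcpt.exists_isMaxOn hne continuous_norm.continuousOn
  refine ⟨μs, hμs, ?_⟩
  rw [spectralRadius]
  refine iSup₂_le fun k hk => ?_
  have h1 : ‖k‖ ≤ ‖μs‖ := hmaxOn hk
  exact_mod_cast ENNReal.coe_le_coe.mpr (by exact_mod_cast h1)

end Helpers

theorem stmt_1 {V₁ V₂ : Type*} [Fintype V₁] [DecidableEq V₁] [Fintype V₂] [DecidableEq V₂]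
    (E₁ : V₁ → V₁ → Prop) [DecidableRel E₁] (E₂ : V₂ → V₂ → Prop) [DecidableRel E₂]
    (hs₁ : IsSimpleDigraph E₁) (hc₁ : StronglyConnected E₁)
    (hs₂ : IsSimpleDigraph E₂) (hc₂ : StronglyConnected E₂)
    (n m : ℕ) (hn₁ : Fintype.card V₁ = n) (hn₂ : Fintype.card V₂ = n) (hn4 : 4 ≤ n)
    (hm₁ : (∑ v, outDeg E₁ v) = m) (hm₂ : (∑ v, outDeg E₂ v) = m)
    (α : ℝ) (hα : 1 / Real.sqrt 2 ≤ α) (hα1 : α < 1)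
    (hΔ : (maxOutDeg E₁ : ℝ) ≥ 2 * α * (1 - α) * ((m : ℝ) - n + 1) + 2 * α)
    (hΔΔ : maxOutDeg E₁ > maxOutDeg E₂) :
    lambdaAlpha α E₂ < lambdaAlpha α E₁ := by
  classical
  simp only [lambdaAlpha]
  have hnV₂ : Nonempty V₂ := Fintype.card_pos_iff.mp (by omega)
  have hnV₁ : Nonempty V₁ := Fintype.card_pos_iff.mp (by omega)
  have hs2 : (0:ℝ) < Real.sqrt 2 := by positivity
  have hs2' : Real.sqrt 2 * Real.sqrt 2 = 2 := Real.mul_self_sqrt (by norm_num)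
  have hs2'' : Real.sqrt 2 < 2 := by nlinarith
  have hαhalf : (1:ℝ)/2 < α := by
    have h := one_div_lt_one_div_of_lt hs2 hs2''
    linarith
  have hαpos : (0:ℝ) < α := by linarith
  have hd1₂ : ∀ v, 1 ≤ outDeg E₂ v := fun v => outDeg_pos E₂ hc₂ (by omega) v
  have hdle₂ : ∀ v, outDeg E₂ v + 1 ≤ maxOutDeg E₁ := fun v => by
    have h1 : outDeg E₂ v ≤ maxOutDeg E₂ :=
      Finset.le_sup (f := outDeg E₂) (Finset.mem_univ v)
    omega
  have hsum₂ : (∑ v, (outDeg E₂ v : ℝ)) = (Fintype.card V₂ : ℝ) + ((m:ℝ) - n + 1) - 1 := by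
    rw [hn₂]
    push_cast [← hm₂]
    ring
  have hB : ∀ μ ∈ spectrum ℂ (Aalpha α E₂), ‖μ‖ < α * (maxOutDeg E₁ : ℝ) := fun μ hμ =>
    keyB E₂ hs₂ hd1₂ α ((m:ℝ) - n + 1) hα hα1 (maxOutDeg E₁) hdle₂ hsum₂ hΔ hμ
  obtain ⟨μs, hμs, hsup⟩ := spec_attains (Aalpha α E₂)
  have hαmaxpos : (0:ℝ) < α * (maxOutDeg E₁ : ℝ) := by
    have h1 : 1 ≤ maxOutDeg E₁ := by omega
    have h2 : (1:ℝ) ≤ (maxOutDeg E₁ : ℝ) := by exact_mod_cast h1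
    nlinarith
  have hA := partA E₁ hs₁ α hαpos.le hα1.le
  calc spectralRadius ℂ (Aalpha α E₂) ≤ (‖μs‖₊ : ℝ≥0∞) := hsup
    _ < ENNReal.ofReal (α * (maxOutDeg E₁ : ℝ)) := by
        rw [← enorm_eq_nnnorm, ← ofReal_norm]
        exact (ENNReal.ofReal_lt_ofReal_iff hαmaxpos).mpr (hB μs hμs)
    _ ≤ spectralRadius ℂ (Aalpha α E₁) := hA
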